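/- Let Q be a finite connected locally strictly simple quandle. Then: (i) for any two distinct congruences α, β of Q, both different from 1_Q, we have α ∧ β = 0_Q; (ii) for every congruence α of Q with 0_Q ≠ α ≠ 1_Q, the quotient quandle Q/α is strictly simple. -/
import Mathlib


/-!  Basic theory of quandles: structures, subquandles, congruences,
quotients, displacement groups, affine and principal quandles. -/

universe u v

/-- A quandle structure on a set `Q`: a binary operation whose left
translations are bijective, which is left self-distributive and idempotent. -/
structure QuandleStruct (Q : Type*) where
  act : Q → Q → Q
  act_bijective : ∀ a, Function.Bijective (act a)
  self_distrib : ∀ a b c, act a (act b c) = act (act a b) (act a c)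
  act_idem : ∀ a, act a a = a

namespace QuandleStruct

variable {Q : Type*} {R : Type*}

/-- The left translation `L_a` as a permutation of `Q`. -/
noncomputable def L (S : QuandleStruct Q) (a : Q) : Equiv.Perm Q :=
  Equiv.ofBijective (S.act a) (S.act_bijective a)

@[simp] lemma L_apply (S : QuandleStruct Q) (a b : Q) : S.L a b = S.act a b := rfl

/-- Left division `a \ b`. -/
noncomputable def ldiv (S : QuandleStruct Q) (a b : Q) : Q := (S.L a).symm b

@[simp] lemma ldiv_act (S : QuandleStruct Q) (a b : Q) : S.ldiv a (S.act a b) = b :=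
  (S.L a).symm_apply_apply b

@[simp] lemma act_ldiv (S : QuandleStruct Q) (a b : Q) : S.act a (S.ldiv a b) = b :=
  (S.L a).apply_symm_apply b

/-- The displacement group `Dis(Q)`, generated by all `L_a ∘ L_b⁻¹`. -/
def Dis (S : QuandleStruct Q) : Subgroup (Equiv.Perm Q) :=
  Subgroup.closure {g | ∃ a b, g = S.L a * (S.L b)⁻¹}

/-- A quandle is connected if its displacement group acts transitively. -/
def Connected (S : QuandleStruct Q) : Prop := ∀ x y : Q, ∃ g ∈ S.Dis, g x = y

/-- A quandle is faithful if `a ↦ L_a` is injective. -/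
def Faithful (S : QuandleStruct Q) : Prop := Function.Injective S.L

/-- A quandle is latin if all right translations are bijective. -/
def Latin (S : QuandleStruct Q) : Prop := ∀ a : Q, Function.Bijective (fun b => S.act b a)

/-- A subquandle: a nonempty subset closed under the operation and left division. -/
def IsSubquandle (S : QuandleStruct Q) (s : Set Q) : Prop :=
  s.Nonempty ∧ ∀ a ∈ s, ∀ b ∈ s, S.act a b ∈ s ∧ S.ldiv a b ∈ s

/-- The quandle structure induced on a subquandle. -/
def restrict (S : QuandleStruct Q) (s : Set Q) (hs : S.IsSubquandle s) :
    QuandleStruct s where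
  act a b := ⟨S.act a.1 b.1, (hs.2 a.1 a.2 b.1 b.2).1⟩
  act_bijective a := by
    constructor
    · intro x y h
      exact Subtype.ext ((S.act_bijective a.1).1 (congrArg Subtype.val h))
    · intro b
      refine ⟨⟨S.ldiv a.1 b.1, (hs.2 a.1 a.2 b.1 b.2).2⟩, Subtype.ext ?_⟩
      exact S.act_ldiv a.1 b.1
  self_distrib a b c := Subtype.ext (S.self_distrib a.1 b.1 c.1)
  act_idem a := Subtype.ext (S.act_idem a.1)

/-- A quandle (with more than one element) is strictly simple if it has no
proper subquandle. -/
def StrictlySimple (S : QuandleStruct Q) : Prop :=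
  Nontrivial Q ∧ ∀ s : Set Q, S.IsSubquandle s → s.Nontrivial → s = Set.univ

/-- A quandle is locally strictly simple (LSS) if every proper subquandle is
strictly simple. -/
def LSS (S : QuandleStruct Q) : Prop :=
  ∀ (s : Set Q) (hs : S.IsSubquandle s), s.Nontrivial → s ≠ Set.univ →
    StrictlySimple (S.restrict s hs)

/-- A congruence of a quandle: an equivalence relation compatible with the
operation and with left division. -/
structure IsCongruence (S : QuandleStruct Q) (r : Q → Q → Prop) : Prop where
  equiv : Equivalence r
  act_comp : ∀ {a b c d}, r a b → r c d → r (S.act a c) (S.act b d)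
  ldiv_comp : ∀ {a b c d}, r a b → r c d → r (S.ldiv a c) (S.ldiv b d)

/-- The setoid attached to a congruence. -/
def IsCongruence.setoid {S : QuandleStruct Q} {r : Q → Q → Prop}
    (hr : S.IsCongruence r) : Setoid Q := ⟨r, hr.equiv⟩

/-- The quotient quandle `Q/α`. -/
def quot (S : QuandleStruct Q) {r : Q → Q → Prop} (hr : S.IsCongruence r) :
    QuandleStruct (Quotient hr.setoid) where
  act := Quotient.map₂ S.act fun _ _ h1 _ _ h2 => hr.act_comp h1 h2
  act_bijective := by
    intro a
    induction a using Quotient.ind with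
    | _ a =>
    constructor
    · intro x y
      induction x using Quotient.ind with
      | _ x =>
      induction y using Quotient.ind with
      | _ y =>
      intro h
      have h1 : r (S.act a x) (S.act a y) := Quotient.exact h
      have h2 := hr.ldiv_comp (hr.equiv.refl a) h1
      rw [S.ldiv_act, S.ldiv_act] at h2
      exact Quotient.sound h2
    · intro b
      induction b using Quotient.ind with
      | _ b =>
      exact ⟨Quotient.mk _ (S.ldiv a b), congrArg (Quotient.mk _) (S.act_ldiv a b)⟩
  self_distrib := by
    intro a b c
    induction a using Quotient.ind with
    | _ a =>
    induction b using Quotient.ind with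
    | _ b =>
    induction c using Quotient.ind with
    | _ c =>
    exact congrArg (Quotient.mk _) (S.self_distrib a b c)
  act_idem := by
    intro a
    induction a using Quotient.ind with
    | _ a =>
    exact congrArg (Quotient.mk _) (S.act_idem a)

/-- The congruence block `[a]_α` is a subquandle. -/
lemma block_isSubquandle (S : QuandleStruct Q) {r : Q → Q → Prop}
    (hr : S.IsCongruence r) (a : Q) : S.IsSubquandle {b | r a b} := by
  refine ⟨⟨a, hr.equiv.refl a⟩, fun x hx y hy => ⟨?_, ?_⟩⟩
  · have h := hr.act_comp hx hy
    rwa [S.act_idem] at h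
  · have h := hr.ldiv_comp hx hy
    have ha : S.ldiv a a = a := by
      have h2 := S.ldiv_act a a
      rwa [S.act_idem] at h2
    rwa [ha] at h

/-- A quandle is simple if its only congruences are `0_Q` (equality) and
`1_Q` (the full relation). -/
def Simple (S : QuandleStruct Q) : Prop :=
  ∀ r : Q → Q → Prop, S.IsCongruence r →
    r = (fun a b : Q => a = b) ∨ r = (fun _ _ : Q => True)

/-- A quandle is subdirectly irreducible if the intersection of all congruences
different from `0_Q` is different from `0_Q`. -/
def SubdirectlyIrreducible (S : QuandleStruct Q) : Prop :=
  ∃ a b : Q, a ≠ b ∧ ∀ r : Q → Q → Prop, S.IsCongruence r →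
    r ≠ (fun a b : Q => a = b) → r a b

/-- Isomorphism of quandles. -/
def QIso (S : QuandleStruct Q) (T : QuandleStruct R) : Prop :=
  ∃ e : Q ≃ R, ∀ a b, e (S.act a b) = T.act (e a) (e b)

/-- The relation `σ_Q` : two elements are related iff their point stabilizers
in the displacement group coincide. -/
def sigmaRel (S : QuandleStruct Q) (a b : Q) : Prop :=
  ∀ g ∈ S.Dis, (g a = a ↔ g b = b)

/-- The displacement group relative to a relation `r`. -/
def DisRel (S : QuandleStruct Q) (r : Q → Q → Prop) : Subgroup (Equiv.Perm Q) :=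
  Subgroup.closure {g | ∃ a b, r a b ∧ g = S.L a * (S.L b)⁻¹}

/-- The direct product of two quandles. -/
def prod (S : QuandleStruct Q) (T : QuandleStruct R) : QuandleStruct (Q × R) where
  act a b := (S.act a.1 b.1, T.act a.2 b.2)
  act_bijective a := by
    show Function.Bijective (Prod.map (S.act a.1) (T.act a.2))
    exact (S.act_bijective a.1).prodMap (T.act_bijective a.2)
  self_distrib a b c := Prod.ext (S.self_distrib a.1 b.1 c.1) (T.self_distrib a.2 b.2 c.2)
  act_idem a := Prod.ext (S.act_idem a.1) (T.act_idem a.2)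

end QuandleStruct

/-- The affine quandle `Aff(A, f)` over an abelian group `A` with
`a * b = (1 - f)(a) + f(b)`. -/
def affineQuandle (A : Type*) [AddCommGroup A] (f : A ≃+ A) : QuandleStruct A where
  act a b := a - f a + f b
  act_bijective a := by
    show Function.Bijective ((fun x : A => a - f a + x) ∘ f)
    exact (Equiv.addLeft (a - f a)).bijective.comp f.bijective
  self_distrib a b c := by
    simp only [map_add, map_sub]
    abel
  act_idem a := by simp

/-- Data for an affine quandle: a finite abelian group together with an
automorphism. -/
structure AffineData : Type 1 where
  carrier : Type
  [grp : AddCommGroup carrier]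
  [fin : Finite carrier]
  equivAdd : carrier ≃+ carrier

attribute [instance] AffineData.grp AffineData.fin

namespace QuandleStruct

/-- A quandle is affine if it is isomorphic to `Aff(A, f)` for some finite
abelian group `A` and automorphism `f`. -/
def IsAffine {Q : Type*} (S : QuandleStruct Q) : Prop :=
  ∃ D : AffineData, S.QIso (affineQuandle D.carrier D.equivAdd)

end QuandleStruct

/-- The principal quandle `Q(G, f)` with `a * b = a f(a⁻¹ b)`. -/
def principalQuandle (G : Type*) [Group G] (f : G ≃* G) : QuandleStruct G where
  act a b := a * f (a⁻¹ * b)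
  act_bijective a := by
    show Function.Bijective ((fun x : G => a * x) ∘ (⇑f) ∘ (fun b : G => a⁻¹ * b))
    exact ((Equiv.mulLeft a).bijective.comp f.bijective).comp (Equiv.mulLeft a⁻¹).bijective
  self_distrib a b c := by
    simp only [map_mul, map_inv, mul_inv_rev, inv_inv]
    group
  act_idem a := by simp

/-- An extraspecial `q`-group: a finite `q`-group whose center, derived
subgroup and Frattini subgroup coincide and have order `q`. -/
def IsExtraspecial (q : ℕ) (G : Type*) [Group G] : Prop :=
  Finite G ∧ IsPGroup q G ∧ Subgroup.center G = commutator G ∧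
    commutator G = frattini G ∧ Nat.card (Subgroup.center G) = q

/-- A bundled group. -/
structure GroupData : Type 1 where
  carrier : Type
  [grp : Group carrier]

attribute [instance] GroupData.grp


namespace QuandleStruct

variable {Q : Type u}

lemma ldiv_self (S : QuandleStruct Q) (a : Q) : S.ldiv a a = a := by
  have h := S.ldiv_act a a
  rwa [S.act_idem] at h

lemma dis_preserves (S : QuandleStruct Q) {r : Q → Q → Prop} (hr : S.IsCongruence r) :
    ∀ g ∈ S.Dis, ∀ a b, r a b → r (g a) (g b) := by
  have key : ∀ g ∈ S.Dis,
      (∀ a b, r a b → r (g a) (g b)) ∧ (∀ a b, r a b → r (g⁻¹ a) (g⁻¹ b)) := by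
    intro g hg
    induction hg using Subgroup.closure_induction with
    | mem x hx =>
      obtain ⟨u, v, rfl⟩ := hx
      constructor
      · intro a b hab
        show r (S.L u ((S.L v)⁻¹ a)) (S.L u ((S.L v)⁻¹ b))
        exact hr.act_comp (hr.equiv.refl u) (hr.ldiv_comp (hr.equiv.refl v) hab)
      · intro a b hab
        rw [mul_inv_rev, inv_inv]
        show r (S.L v ((S.L u)⁻¹ a)) (S.L v ((S.L u)⁻¹ b))
        exact hr.act_comp (hr.equiv.refl v) (hr.ldiv_comp (hr.equiv.refl u) hab)
    | one => exact ⟨fun a b h => by simpa using h, fun a b h => by simpa using h⟩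
    | mul x y hx hy ihx ihy =>
      refine ⟨fun a b hab => ihx.1 _ _ (ihy.1 _ _ hab), fun a b hab => ?_⟩
      rw [mul_inv_rev]
      exact ihy.2 _ _ (ihx.2 _ _ hab)
    | inv x hx ihx => exact ⟨ihx.2, by simpa using ihx.1⟩
  exact fun g hg => (key g hg).1

/-- If a congruence has one nontrivial block, all blocks are nontrivial
(for connected quandles). -/
lemma block_nontrivial (S : QuandleStruct Q) (hconn : S.Connected)
    {r : Q → Q → Prop} (hr : S.IsCongruence r) {a0 b0 : Q} (h0 : r a0 b0)
    (hne : a0 ≠ b0) (c : Q) : ∃ b, b ≠ c ∧ r c b := by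
  obtain ⟨g, hg, hga⟩ := hconn a0 c
  refine ⟨g b0, fun h => hne (g.injective (hga.trans h.symm)), ?_⟩
  have := S.dis_preserves hr g hg a0 b0 h0
  rwa [hga] at this

lemma restrict_ldiv_val (S : QuandleStruct Q) {T : Set Q} (hT : S.IsSubquandle T)
    (x y : T) : ((S.restrict T hT).ldiv x y).1 = S.ldiv x.1 y.1 := by
  have hm : S.ldiv x.1 y.1 ∈ T := (hT.2 _ x.2 _ y.2).2
  have h1 : (S.restrict T hT).act x ⟨S.ldiv x.1 y.1, hm⟩ = y :=
    Subtype.ext (S.act_ldiv x.1 y.1)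
  have h2 := (S.restrict T hT).ldiv_act x ⟨S.ldiv x.1 y.1, hm⟩
  rw [h1] at h2
  rw [h2]

/-- A congruence block intersected with a subquandle is a subquandle of
the restriction. -/
lemma blockRestrict (S : QuandleStruct Q) {r : Q → Q → Prop}
    (hr : S.IsCongruence r) {T : Set Q} (hT : S.IsSubquandle T) {a : Q} (ha : a ∈ T) :
    (S.restrict T hT).IsSubquandle {x : T | r a x.1} := by
  refine ⟨⟨⟨a, ha⟩, hr.equiv.refl a⟩, fun x hx y hy => ⟨?_, ?_⟩⟩
  · have h := hr.act_comp hx hy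
    rw [S.act_idem] at h
    exact h
  · have h := hr.ldiv_comp hx hy
    rw [S.ldiv_self] at h
    show r a (((S.restrict T hT).ldiv x y).1)
    rw [S.restrict_ldiv_val]
    exact h

/-- From `r ≠ 0` obtain a nontrivially related pair. -/
lemma exists_rel_ne {r : Q → Q → Prop} (hrefl : ∀ a, r a a)
    (h : r ≠ (fun a b : Q => a = b)) : ∃ a b, r a b ∧ a ≠ b := by
  by_contra hc
  push_neg at hc
  apply h
  funext a b
  exact propext ⟨fun hab => by by_contra hne; exact hne (hc a b hab),
    fun hab => hab ▸ hrefl a⟩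

lemma exists_not_rel {r : Q → Q → Prop} (h : r ≠ (fun _ _ : Q => True)) :
    ∃ a b, ¬ r a b := by
  by_contra hc
  push_neg at hc
  exact h (funext fun a => funext fun b => propext ⟨fun _ => trivial, fun _ => hc a b⟩)

/-- A block of a congruence `≠ 1` is a proper subset. -/
lemma block_ne_univ {S : QuandleStruct Q} {r : Q → Q → Prop} (hr : S.IsCongruence r)
    (h : r ≠ (fun _ _ : Q => True)) (a : Q) : {b | r a b} ≠ Set.univ := by
  intro heq
  obtain ⟨c, d, hcd⟩ := exists_not_rel h
  have hc : c ∈ {b | r a b} := by rw [heq]; trivial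
  have hd : d ∈ {b | r a b} := by rw [heq]; trivial
  exact hcd (hr.equiv.trans (hr.equiv.symm hc) hd)

/-- Key: if `r` has a nontrivial block and `s` is any congruence with `r ≠ 1`,
then every `r`-block is contained in the corresponding `s`-block. -/
lemma block_subset (S : QuandleStruct Q) (hconn : S.Connected) (hlss : S.LSS)
    {r s : Q → Q → Prop} (hr : S.IsCongruence r) (hs : S.IsCongruence s)
    (hr1 : r ≠ (fun _ _ : Q => True))
    {a0 b0 : Q} (h0 : r a0 b0 ∧ s a0 b0) (hne : a0 ≠ b0) :
    ∀ a b, r a b → s a b := by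
  intro a b hab
  obtain ⟨g, hg, hga⟩ := hconn a0 a
  have hrb1 : r a (g b0) := by
    have := S.dis_preserves hr g hg a0 b0 h0.1; rwa [hga] at this
  have hsb1 : s a (g b0) := by
    have := S.dis_preserves hs g hg a0 b0 h0.2; rwa [hga] at this
  have hb1ne : g b0 ≠ a := fun h => hne (g.injective (hga.trans h.symm))
  -- the r-block B of a
  have hBsub := S.block_isSubquandle hr a
  set B : Set Q := {x | r a x} with hB
  have hBnt : B.Nontrivial := ⟨g b0, hrb1, a, hr.equiv.refl a, hb1ne⟩
  have hBne : B ≠ Set.univ := block_ne_univ hr hr1 a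
  obtain ⟨_, hss⟩ := hlss B hBsub hBnt hBne
  -- the s-block inside B
  have hsub := S.blockRestrict hs hBsub (hr.equiv.refl a : a ∈ B)
  have hnt : ({x : B | s a x.1} : Set B).Nontrivial := by
    refine ⟨⟨g b0, hrb1⟩, hsb1, ⟨a, hr.equiv.refl a⟩, hs.equiv.refl a, ?_⟩
    intro h
    exact hb1ne (congrArg Subtype.val h)
  have := hss _ hsub hnt
  have hbB : (⟨b, hab⟩ : B) ∈ ({x : B | s a x.1} : Set B) := this ▸ Set.mem_univ _
  exact hbB

end QuandleStruct

namespace QuandleStruct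

variable {Q : Type u}

lemma quot_act (S : QuandleStruct Q) {r : Q → Q → Prop} (hr : S.IsCongruence r)
    (a b : Q) : (S.quot hr).act (Quotient.mk hr.setoid a) (Quotient.mk hr.setoid b) =
      Quotient.mk hr.setoid (S.act a b) := rfl

lemma quot_ldiv (S : QuandleStruct Q) {r : Q → Q → Prop} (hr : S.IsCongruence r)
    (a b : Q) : (S.quot hr).ldiv (Quotient.mk hr.setoid a) (Quotient.mk hr.setoid b) =
      Quotient.mk hr.setoid (S.ldiv a b) := by
  have h1 : (Quotient.mk hr.setoid b) =
      (S.quot hr).act (Quotient.mk hr.setoid a) (Quotient.mk hr.setoid (S.ldiv a b)) := by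
    rw [S.quot_act, S.act_ldiv]
  rw [h1, (S.quot hr).ldiv_act]

end QuandleStruct

/-- For a finite connected LSS quandle: (i) any two distinct
congruences different from `1_Q` intersect in `0_Q`; (ii) every quotient by a
proper congruence is strictly simple. -/
theorem statement7 {Q : Type u} [Finite Q] (S : QuandleStruct Q)
    (hconn : S.Connected) (hlss : S.LSS) :
    (∀ r s : Q → Q → Prop, S.IsCongruence r → S.IsCongruence s → r ≠ s →
      r ≠ (fun _ _ : Q => True) → s ≠ (fun _ _ : Q => True) →
      (fun a b => r a b ∧ s a b) = (fun a b : Q => a = b)) ∧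
    (∀ (r : Q → Q → Prop) (hr : S.IsCongruence r),
      r ≠ (fun a b : Q => a = b) → r ≠ (fun _ _ : Q => True) →
      (S.quot hr).StrictlySimple) := by
  constructor
  · -- Part (i)
    intro r s hr hs hrs hr1 hs1
    funext a b
    apply propext
    constructor
    · rintro ⟨hra, hsa⟩
      by_contra hne
      have h1 : ∀ x y, r x y → s x y :=
        S.block_subset hconn hlss hr hs hr1 ⟨hra, hsa⟩ hne
      have h2 : ∀ x y, s x y → r x y :=
        S.block_subset hconn hlss hs hr hs1 ⟨hsa, hra⟩ hne
      exact hrs (funext fun x => funext fun y =>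
        propext ⟨h1 x y, h2 x y⟩)
    · rintro rfl
      exact ⟨hr.equiv.refl a, hs.equiv.refl a⟩
  · -- Part (ii)
    intro r hr hr0 hr1
    constructor
    · obtain ⟨c, d, hcd⟩ := QuandleStruct.exists_not_rel hr1
      exact ⟨Quotient.mk hr.setoid c, Quotient.mk hr.setoid d,
        fun h => hcd (Quotient.exact h)⟩
    · intro u hu hunt
      set T : Set Q := (Quotient.mk hr.setoid) ⁻¹' u with hTdef
      have hTsub : S.IsSubquandle T := by
        obtain ⟨x, hx, y, hy, hxy⟩ := hunt
        obtain ⟨c, rfl⟩ := Quotient.exists_rep x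
        refine ⟨⟨c, hx⟩, fun p hp q hq => ⟨?_, ?_⟩⟩
        · have := (hu.2 _ hp _ hq).1
          rwa [S.quot_act] at this
        · have := (hu.2 _ hp _ hq).2
          rwa [S.quot_ldiv] at this
      by_cases hT : T = Set.univ
      · ext z
        simp only [Set.mem_univ, iff_true]
        obtain ⟨c, rfl⟩ := Quotient.exists_rep z
        have : c ∈ T := by rw [hT]; trivial
        exact this
      · exfalso
        obtain ⟨x, hx, y, hy, hxy⟩ := hunt
        obtain ⟨c, rfl⟩ := Quotient.exists_rep x
        obtain ⟨d, rfl⟩ := Quotient.exists_rep y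
        have hcT : c ∈ T := hx
        have hdT : d ∈ T := hy
        have hcd : c ≠ d := fun h => hxy (h ▸ rfl)
        have hTnt : T.Nontrivial := ⟨c, hcT, d, hdT, hcd⟩
        obtain ⟨_, hss⟩ := hlss T hTsub hTnt hT
        obtain ⟨a0, b0, h0, h0ne⟩ :=
          QuandleStruct.exists_rel_ne hr.equiv.refl hr0
        obtain ⟨b, hbne, hcb⟩ := S.block_nontrivial hconn hr h0 h0ne c
        have hbT : b ∈ T := by
          show Quotient.mk hr.setoid b ∈ u
          have : Quotient.mk hr.setoid b = Quotient.mk hr.setoid c :=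
            Quotient.sound (hr.equiv.symm hcb)
          rw [this]; exact hcT
        have hsub := S.blockRestrict hr hTsub hcT
        have hnt : ({x : T | r c x.1} : Set T).Nontrivial := by
          refine ⟨⟨b, hbT⟩, hcb, ⟨c, hcT⟩, hr.equiv.refl c, ?_⟩
          intro h
          exact hbne (congrArg Subtype.val h)
        have huniv := hss _ hsub hnt
        have : (⟨d, hdT⟩ : T) ∈ ({x : T | r c x.1} : Set T) :=
          huniv ▸ Set.mem_univ _
        exact hxy (Quotient.sound this)
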